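/- Consider the time-varying Levins model with rescue effect, p'(t) = c(t)·p(t)·(1 − p(t)) − e(t)·p(t)·(1 − p(t)), where c, e : [0,∞) → ℝ are bounded continuous functions with c(t) > 0 and e(t) ≥ 0 for all t ≥ 0; set D(t) = e(t) − c(t) and Φ(t,s) = exp(∫_s^t D(τ) dτ). Then every differentiable solution p : [0,∞) → ℝ with p(0) ∈ (0,1) satisfies p(t) ∈ (0,1) for all t ≥ 0 and the exact formula 1/p(t) = 1 + Φ(t,0)·(1/p(0) − 1) for all t ≥ 0. Consequently: if β⁺(D) < 0, then there exist K ≥ 1 and α > 0 with 1 − p(t) ≤ K·(1/p(0) − 1)·exp(−α·t) for all t ≥ 0 (the fraction of occupied patches converges exponentially to 1). -/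

import Mathlib

open Filter Set

/-- Transition operator of the scalar linear equation `x' = D t * x`. -/
noncomputable def Phi (D : ℝ → ℝ) (t s : ℝ) : ℝ :=
  Real.exp (∫ τ in s..t, D τ)

/-- Average of `D` over the interval from `q.1` to `q.2`. -/
noncomputable def bohlAvg (D : ℝ → ℝ) (q : ℝ × ℝ) : ℝ :=
  (q.2 - q.1)⁻¹ * ∫ τ in q.1..q.2, D τ

/-- The filter describing `t - s → +∞` with `t > s ≥ 0` for pairs `q = (s, t)`. -/
def bohlFilter : Filter (ℝ × ℝ) :=
  (Filter.atTop.comap fun q : ℝ × ℝ => q.2 - q.1) ⊓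
    Filter.principal {q : ℝ × ℝ | 0 ≤ q.1 ∧ q.1 < q.2}

/-- Upper Bohl exponent of `D`. -/
noncomputable def bohlUpper (D : ℝ → ℝ) : ℝ :=
  Filter.limsup (bohlAvg D) bohlFilter

/-- Lower Bohl exponent of `D`. -/
noncomputable def bohlLower (D : ℝ → ℝ) : ℝ :=
  Filter.liminf (bohlAvg D) bohlFilter

/-- Rescue-effect model `p' = c t * p * (1 - p) - e t * p * (1 - p)`: the interval
`(0,1)` is invariant, the exact formula `1 / p t = 1 + Φ(t,0) (1 / p 0 - 1)` holds,
and if `β⁺(e - c) < 0` the occupied fraction converges exponentially to `1`. -/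
theorem rescue_effect_model (c e : ℝ → ℝ)
    (hc_cont : ContinuousOn c (Set.Ici 0)) (he_cont : ContinuousOn e (Set.Ici 0))
    (hc_bdd : ∃ M, ∀ t, 0 ≤ t → |c t| ≤ M) (he_bdd : ∃ M, ∀ t, 0 ≤ t → |e t| ≤ M)
    (hc_pos : ∀ t, 0 ≤ t → 0 < c t) (he_nonneg : ∀ t, 0 ≤ t → 0 ≤ e t)
    (D : ℝ → ℝ) (hD : ∀ t, D t = e t - c t)
    (p : ℝ → ℝ)
    (hp : ∀ t, 0 ≤ t → HasDerivAt p (c t * p t * (1 - p t) - e t * p t * (1 - p t)) t)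
    (hp0 : p 0 ∈ Set.Ioo (0 : ℝ) 1) :
    (∀ t, 0 ≤ t → p t ∈ Set.Ioo (0 : ℝ) 1) ∧
    (∀ t, 0 ≤ t → 1 / p t = 1 + Phi D t 0 * (1 / p 0 - 1)) ∧
    (bohlUpper D < 0 →
      ∃ K α : ℝ, 1 ≤ K ∧ 0 < α ∧
        ∀ t, 0 ≤ t → 1 - p t ≤ K * (1 / p 0 - 1) * Real.exp (-α * t)) := by
  obtain ⟨Mc, hMc⟩ := hc_bdd
  obtain ⟨Me, hMe⟩ := he_bdd
  obtain ⟨hp0l, hp0r⟩ := hp0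
  have hp0ne : p 0 ≠ 0 := ne_of_gt hp0l
  set Dx : ℝ → ℝ := fun τ => e (max τ 0) - c (max τ 0) with hDxdef
  have hDx_cont : Continuous Dx := by
    have h1 : Continuous fun τ : ℝ => max τ 0 := continuous_id.max continuous_const
    exact (he_cont.comp_continuous h1 fun x => Set.mem_Ici.mpr (le_max_right _ _)).sub
      (hc_cont.comp_continuous h1 fun x => Set.mem_Ici.mpr (le_max_right _ _))
  have hDx_eq : ∀ t, 0 ≤ t → Dx t = D t := by
    intro t ht; simp [hDxdef, hD, max_eq_left ht]
  set A : ℝ → ℝ := fun t => ∫ τ in (0:ℝ)..t, Dx τ with hAdef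
  have hA : ∀ t, HasDerivAt A (Dx t) t :=
    fun t => (hDx_cont.integral_hasStrictDerivAt 0 t).hasDerivAt
  have hA_cont : Continuous A := continuous_iff_continuousAt.mpr fun t => (hA t).continuousAt
  have hA_eq : ∀ t, 0 ≤ t → A t = ∫ τ in (0:ℝ)..t, D τ := by
    intro t ht
    apply intervalIntegral.integral_congr
    intro τ hτ
    rw [Set.uIcc_of_le ht] at hτ
    exact hDx_eq τ hτ.1
  have hA0 : A 0 = 0 := intervalIntegral.integral_same
  have hMD : ∀ t, 0 ≤ t → |D t| ≤ Me + Mc := by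
    intro t ht
    rw [hD]
    calc |e t - c t| ≤ |e t| + |c t| := abs_sub _ _
      _ ≤ Me + Mc := add_le_add (hMe t ht) (hMc t ht)
  set C : ℝ := 1 / p 0 - 1 with hCdef
  have hC_pos : 0 < C := by
    rw [hCdef, lt_sub_iff_add_lt, zero_add, lt_div_iff₀ hp0l, one_mul]; exact hp0r
  set h : ℝ → ℝ := fun t => (1 - p t) - C * (p t * Real.exp (A t)) with hhdef
  have hh0 : h 0 = 0 := by
    simp only [hhdef, hA0, Real.exp_zero, mul_one, hCdef]
    field_simp
    ring
  have hh' : ∀ t, 0 ≤ t → HasDerivAt h ((e t - c t) * p t * h t) t := by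
    intro t ht
    have h1 : HasDerivAt (fun s => p s * Real.exp (A s))
        ((c t * p t * (1 - p t) - e t * p t * (1 - p t)) * Real.exp (A t)
          + p t * (Real.exp (A t) * Dx t)) t := (hp t ht).mul ((hA t).exp)
    have h2 := ((hp t ht).const_sub 1).sub (h1.const_mul C)
    have hDt : Dx t = e t - c t := by rw [hDx_eq t ht, hD]
    refine h2.congr_deriv ?_
    simp only [hhdef]
    rw [hDt]
    ring
  have hkey : ∀ t, 0 ≤ t → h t = 0 := by
    intro T hT
    obtain ⟨Mp, hMp⟩ := isCompact_Icc.exists_bound_of_continuousOn (s := Icc (0:ℝ) T)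
      (f := p) (fun s hs => ((hp s hs.1).continuousAt).continuousWithinAt)
    have hMDnn : 0 ≤ Me + Mc := le_trans (abs_nonneg _) (hMD 0 le_rfl)
    have hgr := norm_le_gronwallBound_of_norm_deriv_right_le (f := h)
      (f' := fun s => (e s - c s) * p s * h s) (δ := 0) (K := (Me + Mc) * Mp) (ε := 0)
      (a := 0) (b := T)
      (fun s hs => ((hh' s hs.1).continuousAt).continuousWithinAt)
      (fun s hs => (hh' s hs.1).hasDerivWithinAt)
      (by rw [hh0]; simp)
      (fun s hs => by
        have hb1 : ‖e s - c s‖ ≤ Me + Mc := by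
          rw [Real.norm_eq_abs, ← hD]; exact hMD s hs.1
        have hb2 : ‖p s‖ ≤ Mp := hMp s ⟨hs.1, le_of_lt hs.2⟩
        calc ‖(e s - c s) * p s * h s‖ = ‖e s - c s‖ * ‖p s‖ * ‖h s‖ := by
              rw [norm_mul, norm_mul]
          _ ≤ (Me + Mc) * Mp * ‖h s‖ :=
              mul_le_mul_of_nonneg_right
                (mul_le_mul hb1 hb2 (norm_nonneg _) hMDnn) (norm_nonneg _)
          _ = (Me + Mc) * Mp * ‖h s‖ + 0 := by ring)
      T ⟨hT, le_rfl⟩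
    rw [gronwallBound_ε0_δ0] at hgr
    exact norm_le_zero_iff.mp hgr
  have hform : ∀ t, 0 ≤ t → p t * (1 + C * Real.exp (A t)) = 1 := by
    intro t ht
    have hk := hkey t ht
    simp only [hhdef] at hk
    linear_combination -hk
  have hden : ∀ t, (1:ℝ) < 1 + C * Real.exp (A t) := fun t => by
    nlinarith [Real.exp_pos (A t), hC_pos]
  have hmem : ∀ t, 0 ≤ t → p t ∈ Set.Ioo (0:ℝ) 1 := by
    intro t ht
    have h1 := hform t ht
    have h2 := hden t
    constructor
    · nlinarith
    · nlinarith
  have hformula : ∀ t, 0 ≤ t → 1 / p t = 1 + Phi D t 0 * (1 / p 0 - 1) := by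
    intro t ht
    have h1 := hform t ht
    have hpne : p t ≠ 0 := ne_of_gt (hmem t ht).1
    rw [Phi, ← hA_eq t ht, ← hCdef, div_eq_iff hpne]
    linear_combination -h1
  refine ⟨hmem, hformula, ?_⟩
  intro hβ
  set α : ℝ := -bohlUpper D / 2 with hαdef
  have hα : 0 < α := by rw [hαdef]; linarith
  have hbdd : Filter.IsBoundedUnder (· ≤ ·) bohlFilter (bohlAvg D) := by
    refine ⟨Me + Mc, ?_⟩
    rw [Filter.eventually_map]
    have hmemset : {q : ℝ × ℝ | 0 ≤ q.1 ∧ q.1 < q.2} ∈ bohlFilter :=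
      mem_inf_of_right (Filter.mem_principal_self _)
    filter_upwards [hmemset] with q hq
    obtain ⟨hq1, hq2⟩ := hq
    have hd : 0 < q.2 - q.1 := sub_pos.mpr hq2
    have hI : |∫ τ in q.1..q.2, D τ| ≤ (Me + Mc) * (q.2 - q.1) := by
      have hbound := intervalIntegral.norm_integral_le_of_norm_le_const
        (C := Me + Mc) (f := D) (a := q.1) (b := q.2)
        (fun x hx => by
          rw [Set.uIoc_of_le (le_of_lt hq2)] at hx
          rw [Real.norm_eq_abs]
          exact hMD x (le_trans hq1 hx.1.le))
      rwa [Real.norm_eq_abs, abs_of_pos hd] at hbound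
    calc bohlAvg D q ≤ |bohlAvg D q| := le_abs_self _
      _ = (q.2 - q.1)⁻¹ * |∫ τ in q.1..q.2, D τ| := by
          rw [bohlAvg, abs_mul, abs_inv, abs_of_pos hd]
      _ ≤ (q.2 - q.1)⁻¹ * ((Me + Mc) * (q.2 - q.1)) := by gcongr
      _ = Me + Mc := by field_simp
  have hlt : bohlUpper D < -α := by rw [hαdef]; linarith
  have hev : ∀ᶠ q in bohlFilter, bohlAvg D q < -α :=
    Filter.eventually_lt_of_limsup_lt hlt hbdd
  rw [bohlFilter] at hev
  rw [Filter.eventually_inf_principal, Filter.eventually_comap, Filter.eventually_atTop] at hev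
  obtain ⟨T, hT⟩ := hev
  set T' : ℝ := max T 1 with hT'def
  have hAlt : ∀ t, T' ≤ t → A t ≤ -α * t := by
    intro t ht
    have htpos : (0:ℝ) < t := lt_of_lt_of_le one_pos (le_trans (le_max_right _ _) ht)
    have havg := hT t (le_trans (le_max_left _ _) ht) (0, t) (by norm_num)
      ⟨le_rfl, htpos⟩
    rw [bohlAvg] at havg
    simp only [sub_zero] at havg
    rw [hA_eq t (le_of_lt htpos)]
    have h3 := mul_lt_mul_of_pos_left havg htpos
    rw [← mul_assoc, mul_inv_cancel₀ htpos.ne', one_mul] at h3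
    linarith
  obtain ⟨B, hB⟩ := isCompact_Icc.exists_bound_of_continuousOn (s := Icc (0:ℝ) T')
    (f := fun t => A t + α * t)
    ((hA_cont.add (continuous_const.mul continuous_id)).continuousOn)
  set K : ℝ := max 1 (Real.exp B) with hKdef
  have hexp_le : ∀ t, 0 ≤ t → Real.exp (A t) ≤ K * Real.exp (-α * t) := by
    intro t ht
    rcases le_total t T' with hcase | hcase
    · have hb := hB t ⟨ht, hcase⟩
      rw [Real.norm_eq_abs] at hb
      have h1 : A t ≤ B + -α * t := by
        have := (abs_le.mp hb).2
        linarith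
      calc Real.exp (A t) ≤ Real.exp (B + -α * t) := Real.exp_le_exp.mpr h1
        _ = Real.exp B * Real.exp (-α * t) := Real.exp_add _ _
        _ ≤ K * Real.exp (-α * t) :=
            mul_le_mul_of_nonneg_right (le_max_right _ _) (Real.exp_pos _).le
    · have h1 : A t ≤ -α * t := hAlt t hcase
      calc Real.exp (A t) ≤ Real.exp (-α * t) := Real.exp_le_exp.mpr h1
        _ ≤ K * Real.exp (-α * t) :=
            le_mul_of_one_le_left (Real.exp_pos _).le (le_max_left _ _)
  refine ⟨K, α, le_max_left _ _, hα, ?_⟩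
  intro t ht
  have h1 := hkey t ht
  simp only [hhdef] at h1
  have h2 : 1 - p t = C * (p t * Real.exp (A t)) := by linarith
  have h3 : p t ≤ 1 := (hmem t ht).2.le
  have h4 : 0 < p t := (hmem t ht).1
  have h5 := hexp_le t ht
  calc 1 - p t = C * (p t * Real.exp (A t)) := h2
    _ ≤ C * Real.exp (A t) := by nlinarith [(Real.exp_pos (A t)).le]
    _ ≤ C * (K * Real.exp (-α * t)) := mul_le_mul_of_nonneg_left h5 hC_pos.le
    _ = K * C * Real.exp (-α * t) := by ring
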